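/- There exists a constant C > 0 such that for all integers k, l ≥ 1 one has ∫₀¹ (kπ cos(kπr) − sin(kπr)/r)² sin²(lπr) r^{-2} dr ≤ C k² · min(k, l). -/

import Mathlib

open Real MeasureTheory

lemma xcos_sub_sin_abs_le {x : ℝ} (hx : 0 ≤ x) :
    |x * Real.cos x - Real.sin x| ≤ x ^ 3 / 3 := by
  have key : ∀ s : ℝ, (s = 1 ∨ s = -1) →
      s * (x * Real.cos x - Real.sin x) ≤ x ^ 3 / 3 := by
    intro s hs
    set F : ℝ → ℝ := fun y => y ^ 3 / 3 - s * (y * Real.cos y - Real.sin y) with hF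
    have hd : ∀ y : ℝ, HasDerivAt F (y ^ 2 + s * (y * Real.sin y)) y := by
      intro y
      have h1 : HasDerivAt (fun y : ℝ => y ^ 3 / 3) (y ^ 2) y := by
        have := (hasDerivAt_pow 3 y).div_const 3
        simpa using this
      have h2 : HasDerivAt (fun y : ℝ => y * Real.cos y - Real.sin y)
          (-(y * Real.sin y)) y := by
        have hc : HasDerivAt (fun y : ℝ => y * Real.cos y)
            (1 * Real.cos y + y * (-Real.sin y)) y :=
          (hasDerivAt_id y).mul (Real.hasDerivAt_cos y)
        have := hc.sub (Real.hasDerivAt_sin y)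
        refine this.congr_deriv ?_
        ring
      have := h1.sub ((h2.const_mul s))
      refine this.congr_deriv ?_
      ring
    have hmono : Monotone F := by
      apply monotone_of_deriv_nonneg
      · exact fun y => (hd y).differentiableAt
      · intro y
        rw [(hd y).deriv]
        have h2 : |s * (y * Real.sin y)| ≤ y ^ 2 := by
          rcases hs with h | h <;> rw [h] <;>
          · simp only [abs_mul, abs_neg, abs_one, one_mul, neg_mul, neg_one_mul]
            calc |y| * |Real.sin y| ≤ |y| * |y| :=
                  mul_le_mul_of_nonneg_left Real.abs_sin_le_abs (abs_nonneg y)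
              _ = y ^ 2 := by rw [← abs_mul, ← sq, abs_sq]
        nlinarith [neg_abs_le (s * (y * Real.sin y)), h2]
    have h0 : F 0 = 0 := by simp [hF]
    have := hmono hx
    rw [h0] at this
    simp only [hF] at this
    linarith
  rcases abs_cases (x * Real.cos x - Real.sin x) with ⟨h, _⟩ | ⟨h, _⟩
  · rw [h]; simpa using key 1 (Or.inl rfl)
  · rw [h]; have := key (-1) (Or.inr rfl); linarith

lemma split_bound (f : ℝ → ℝ) (hf : IntervalIntegrable f volume 0 1)
    (a c₁ c₂ : ℝ) (ha : 0 < a) (ha1 : a ≤ 1) (hc₂ : 0 ≤ c₂)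
    (h1 : ∀ r ∈ Set.Icc (0:ℝ) a, f r ≤ c₁)
    (h2 : ∀ r ∈ Set.Icc a (1:ℝ), f r ≤ c₂ * r ^ (-2 : ℤ)) :
    (∫ r in (0:ℝ)..1, f r) ≤ a * c₁ + c₂ / a := by
  have hfa : IntervalIntegrable f volume 0 a :=
    hf.mono_set (Set.uIcc_subset_uIcc (by simp) (by
      rw [Set.uIcc_of_le (by norm_num : (0:ℝ) ≤ 1)]
      exact ⟨ha.le, ha1⟩))
  have hfa1 : IntervalIntegrable f volume a 1 :=
    hf.mono_set (Set.uIcc_subset_uIcc (by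
      rw [Set.uIcc_of_le (by norm_num : (0:ℝ) ≤ 1)]
      exact ⟨ha.le, ha1⟩) (by simp))
  have hsplit : (∫ r in (0:ℝ)..1, f r)
      = (∫ r in (0:ℝ)..a, f r) + ∫ r in a..(1:ℝ), f r :=
    (intervalIntegral.integral_add_adjacent_intervals hfa hfa1).symm
  have hzero : (0:ℝ) ∉ Set.uIcc a 1 := by
    rw [Set.uIcc_of_le ha1]
    intro h
    exact absurd h.1 (not_le.2 ha)
  have hgcont : ContinuousOn (fun r : ℝ => c₂ * r ^ (-2 : ℤ)) (Set.uIcc a 1) := by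
    apply continuousOn_const.mul
    intro x hx
    exact (continuousAt_zpow₀ x (-2) (Or.inl (fun h => hzero (h ▸ hx)))).continuousWithinAt
  have hgint : IntervalIntegrable (fun r : ℝ => c₂ * r ^ (-2 : ℤ)) volume a 1 :=
    hgcont.intervalIntegrable
  have b1 : (∫ r in (0:ℝ)..a, f r) ≤ a * c₁ := by
    have := intervalIntegral.integral_mono_on ha.le hfa
      (intervalIntegrable_const (c := c₁)) h1
    simpa using this
  have b2 : (∫ r in a..(1:ℝ), f r) ≤ c₂ / a := by
    have hle := intervalIntegral.integral_mono_on ha1 hfa1 hgint h2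
    have hval : (∫ r in a..(1:ℝ), c₂ * r ^ (-2 : ℤ)) = c₂ * (a⁻¹ - 1) := by
      rw [intervalIntegral.integral_const_mul, integral_zpow (Or.inr ⟨by norm_num, hzero⟩)]
      congr 1
      norm_num
      ring
    rw [hval] at hle
    have : c₂ * (a⁻¹ - 1) ≤ c₂ / a := by
      rw [div_eq_mul_inv]
      nlinarith
    linarith
  linarith [hsplit, b1, b2]

set_option maxHeartbeats 1000000 in
/-- Gradient bilinear eigenfunction estimate: for the radial Dirichlet eigenfunctions
`e_k(r) = sin(kπr)/r` on the unit ball of `ℝ³`, one has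
`‖(∇e_k) e_l‖_{L²(B)}² ≤ C k² min(k,l)`. -/
theorem gradient_bilinear_eigenfunction_estimate :
    ∃ C > (0 : ℝ), ∀ k l : ℕ, 1 ≤ k → 1 ≤ l →
      (∫ r in (0:ℝ)..1,
          ((k : ℝ) * π * Real.cos ((k : ℝ) * π * r)
              - Real.sin ((k : ℝ) * π * r) / r) ^ 2
            * Real.sin ((l : ℝ) * π * r) ^ 2 / r ^ 2)
        ≤ C * (k : ℝ) ^ 2 * min (k : ℝ) (l : ℝ) := by
  refine ⟨8 * π ^ 3, by positivity, ?_⟩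
  intro k l hk hl
  have hπ : (0:ℝ) < π := Real.pi_pos
  have hπ1 : (1:ℝ) ≤ π := by linarith [Real.pi_gt_three]
  have hk1 : (1:ℝ) ≤ (k:ℝ) := by exact_mod_cast hk
  have hl1 : (1:ℝ) ≤ (l:ℝ) := by exact_mod_cast hl
  set K : ℝ := (k:ℝ) * π with hK
  set L : ℝ := (l:ℝ) * π with hL
  have hKpos : 0 < K := by positivity
  have hLpos : 0 < L := by positivity
  have hK1 : (1:ℝ) ≤ K := by nlinarith
  have hL1 : (1:ℝ) ≤ L := by nlinarith
  set f : ℝ → ℝ := fun r =>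
    ((k : ℝ) * π * Real.cos ((k : ℝ) * π * r) - Real.sin ((k : ℝ) * π * r) / r) ^ 2
      * Real.sin ((l : ℝ) * π * r) ^ 2 / r ^ 2 with hf
  have hrhs_nonneg : 0 ≤ 8 * π ^ 3 * (k:ℝ) ^ 2 * min (k:ℝ) (l:ℝ) := by
    have : (0:ℝ) ≤ min (k:ℝ) (l:ℝ) := le_min (by linarith) (by linarith)
    positivity
  by_cases hint : IntervalIntegrable f volume 0 1
  swap
  · rw [intervalIntegral.integral_undef hint]
    exact hrhs_nonneg
  -- pointwise bounds
  have hg_le : ∀ r : ℝ, 0 < r → |K * Real.cos (K * r) - Real.sin (K * r) / r| ≤ 2 * K := by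
    intro r hr
    have h1 : |K * Real.cos (K * r)| ≤ K := by
      rw [abs_mul, abs_of_pos hKpos]
      nlinarith [Real.abs_cos_le_one (K * r), hKpos]
    have h2 : |Real.sin (K * r) / r| ≤ K := by
      rw [abs_div, abs_of_pos hr, div_le_iff₀ hr]
      calc |Real.sin (K * r)| ≤ |K * r| := Real.abs_sin_le_abs
        _ = K * r := abs_of_pos (by positivity)
    calc |K * Real.cos (K * r) - Real.sin (K * r) / r|
        ≤ |K * Real.cos (K * r)| + |Real.sin (K * r) / r| := abs_sub _ _
      _ ≤ 2 * K := by linarith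
  have hg_le2 : ∀ r : ℝ, 0 < r →
      |K * Real.cos (K * r) - Real.sin (K * r) / r| ≤ K ^ 3 * r ^ 2 / 3 := by
    intro r hr
    have hx : (0:ℝ) ≤ K * r := by positivity
    have := xcos_sub_sin_abs_le hx
    have heq : K * Real.cos (K * r) - Real.sin (K * r) / r
        = ((K * r) * Real.cos (K * r) - Real.sin (K * r)) / r := by
      field_simp
    rw [heq, abs_div, abs_of_pos hr, div_le_iff₀ hr]
    calc |(K * r) * Real.cos (K * r) - Real.sin (K * r)| ≤ (K * r) ^ 3 / 3 := this
      _ = K ^ 3 * r ^ 2 / 3 * r := by ring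
  have hf0 : f 0 = 0 := by simp [hf]
  have hsin_le : ∀ r : ℝ, 0 ≤ r → Real.sin (L * r) ^ 2 ≤ L ^ 2 * r ^ 2 := by
    intro r hr
    have habs : |Real.sin (L * r)| ≤ L * r :=
      Real.abs_sin_le_abs.trans_eq (abs_of_nonneg (by positivity))
    have h2 := abs_le.mp habs
    nlinarith [h2.1, h2.2]
  -- bound on [a,1] (common to both cases)
  have hbound2 : ∀ m : ℝ, 0 < m → ∀ r ∈ Set.Icc (1 / m) (1:ℝ), f r ≤ (4 * K ^ 2) * r ^ (-2 : ℤ) := by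
    intro m hm r hr
    have hr0 : 0 < r := lt_of_lt_of_le (by positivity) hr.1
    have hg := hg_le r hr0
    have hg2 : (K * Real.cos (K * r) - Real.sin (K * r) / r) ^ 2 ≤ 4 * K ^ 2 := by
      have h := abs_le.mp hg
      calc (K * Real.cos (K * r) - Real.sin (K * r) / r) ^ 2 ≤ (2 * K) ^ 2 :=
            sq_le_sq' h.1 h.2
        _ = 4 * K ^ 2 := by ring
    have hsin1 : Real.sin (L * r) ^ 2 ≤ 1 := by
      have := Real.sin_sq_le_one (L * r)
      linarith
    have hfr : f r = (K * Real.cos (K * r) - Real.sin (K * r) / r) ^ 2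
        * Real.sin (L * r) ^ 2 / r ^ 2 := by
      simp only [hf, hK, hL]
    rw [hfr, zpow_neg]
    rw [div_le_iff₀ (by positivity : (0:ℝ) < r ^ 2)]
    have : ((r : ℝ) ^ (2:ℤ))⁻¹ * r ^ 2 = 1 := by
      rw [zpow_two]
      field_simp
    calc (K * Real.cos (K * r) - Real.sin (K * r) / r) ^ 2 * Real.sin (L * r) ^ 2
        ≤ 4 * K ^ 2 * 1 :=
          mul_le_mul hg2 hsin1 (sq_nonneg _) (by positivity)
      _ = 4 * K ^ 2 * (((r:ℝ) ^ (2:ℤ))⁻¹ * r ^ 2) := by rw [this]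
      _ = 4 * K ^ 2 * ((r:ℝ) ^ (2:ℤ))⁻¹ * r ^ 2 := by ring
  -- bound A on [0, 1/L]
  have hboundA : ∀ r ∈ Set.Icc (0:ℝ) (1 / L), f r ≤ 4 * K ^ 2 * L ^ 2 := by
    intro r hr
    rcases eq_or_lt_of_le hr.1 with h0 | hr0
    · rw [← h0, hf0]; positivity
    · have hg := hg_le r hr0
      have hg2 : (K * Real.cos (K * r) - Real.sin (K * r) / r) ^ 2 ≤ 4 * K ^ 2 := by
        have h := abs_le.mp hg
        calc (K * Real.cos (K * r) - Real.sin (K * r) / r) ^ 2 ≤ (2 * K) ^ 2 :=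
              sq_le_sq' h.1 h.2
          _ = 4 * K ^ 2 := by ring
      have hs := hsin_le r hr0.le
      have hfr : f r = (K * Real.cos (K * r) - Real.sin (K * r) / r) ^ 2
          * Real.sin (L * r) ^ 2 / r ^ 2 := by
        simp only [hf, hK, hL]
      rw [hfr, div_le_iff₀ (by positivity : (0:ℝ) < r ^ 2)]
      calc (K * Real.cos (K * r) - Real.sin (K * r) / r) ^ 2 * Real.sin (L * r) ^ 2
          ≤ 4 * K ^ 2 * (L ^ 2 * r ^ 2) :=
            mul_le_mul hg2 hs (sq_nonneg _) (by positivity)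
        _ = 4 * K ^ 2 * L ^ 2 * r ^ 2 := by ring
  -- bound B on [0, 1/K]
  have hboundB : ∀ r ∈ Set.Icc (0:ℝ) (1 / K), f r ≤ K ^ 4 / 9 := by
    intro r hr
    rcases eq_or_lt_of_le hr.1 with h0 | hr0
    · rw [← h0, hf0]; positivity
    · have hg := hg_le2 r hr0
      have hg2 : (K * Real.cos (K * r) - Real.sin (K * r) / r) ^ 2
          ≤ (K ^ 3 * r ^ 2 / 3) ^ 2 := by
        have h := abs_le.mp hg
        exact sq_le_sq' h.1 h.2
      have hsin1 : Real.sin (L * r) ^ 2 ≤ 1 := by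
        have := Real.sin_sq_le_one (L * r)
        linarith
      have hru : r ≤ 1 / K := hr.2
      have hfr : f r = (K * Real.cos (K * r) - Real.sin (K * r) / r) ^ 2
          * Real.sin (L * r) ^ 2 / r ^ 2 := by
        simp only [hf, hK, hL]
      rw [hfr, div_le_iff₀ (by positivity : (0:ℝ) < r ^ 2)]
      -- (K^3 r^2/3)^2 * 1 = K^6 r^4 / 9 ≤ K^4/9 * r^2 since K^2 r^2 ≤ 1
      have hKr : r * K ≤ 1 := (le_div_iff₀ hKpos).mp hru
      have hmm := mul_le_mul hKr hKr (by positivity) zero_le_one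
      have hKr2 : K ^ 2 * r ^ 2 ≤ 1 := by nlinarith [hmm]
      calc (K * Real.cos (K * r) - Real.sin (K * r) / r) ^ 2 * Real.sin (L * r) ^ 2
          ≤ (K ^ 3 * r ^ 2 / 3) ^ 2 * 1 :=
            mul_le_mul hg2 hsin1 (sq_nonneg _) (by positivity)
        _ = (K ^ 3 * r ^ 2 / 3) ^ 2 := by ring
        _ = K ^ 4 * r ^ 2 * (K ^ 2 * r ^ 2) / 9 := by ring
        _ ≤ K ^ 4 * r ^ 2 * 1 / 9 := by
            have h6 : K ^ 4 * r ^ 2 * (K ^ 2 * r ^ 2) ≤ K ^ 4 * r ^ 2 * 1 :=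
              mul_le_mul_of_nonneg_left hKr2 (by positivity)
            linarith
        _ = K ^ 4 / 9 * r ^ 2 := by ring
  -- assemble
  have haL : 0 < 1 / L := by positivity
  have haL1 : 1 / L ≤ 1 := by rw [div_le_one hLpos]; exact hL1
  have haK : 0 < 1 / K := by positivity
  have haK1 : 1 / K ≤ 1 := by rw [div_le_one hKpos]; exact hK1
  have hc2 : 0 ≤ 4 * K ^ 2 := by positivity
  have hA : (∫ r in (0:ℝ)..1, f r) ≤ (1 / L) * (4 * K ^ 2 * L ^ 2) + (4 * K ^ 2) / (1 / L) :=
    split_bound f hint (1 / L) _ _ haL haL1 hc2 hboundA (hbound2 L hLpos)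
  have hB : (∫ r in (0:ℝ)..1, f r) ≤ (1 / K) * (K ^ 4 / 9) + (4 * K ^ 2) / (1 / K) :=
    split_bound f hint (1 / K) _ _ haK haK1 hc2 hboundB (hbound2 K hKpos)
  have hAval : (1 / L) * (4 * K ^ 2 * L ^ 2) + (4 * K ^ 2) / (1 / L) = 8 * K ^ 2 * L := by
    field_simp
    ring
  have hBval : (1 / K) * (K ^ 4 / 9) + (4 * K ^ 2) / (1 / K) ≤ 8 * K ^ 3 := by
    have : (1 / K) * (K ^ 4 / 9) = K ^ 3 / 9 := by field_simp
    rw [this]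
    have : (4 * K ^ 2) / (1 / K) = 4 * K ^ 3 := by field_simp
    rw [this]
    nlinarith [pow_pos hKpos 3]
  rcases le_total (k:ℝ) (l:ℝ) with hkl | hkl
  · rw [min_eq_left hkl]
    have : (∫ r in (0:ℝ)..1, f r) ≤ 8 * K ^ 3 := le_trans hB hBval
    calc (∫ r in (0:ℝ)..1, f r) ≤ 8 * K ^ 3 := this
      _ ≤ 8 * π ^ 3 * (k:ℝ) ^ 2 * (k:ℝ) := by rw [hK]; nlinarith [hπ, hk1]
  · rw [min_eq_right hkl]
    rw [hAval] at hA
    calc (∫ r in (0:ℝ)..1, f r) ≤ 8 * K ^ 2 * L := hA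
      _ ≤ 8 * π ^ 3 * (k:ℝ) ^ 2 * (l:ℝ) := by rw [hK, hL]; nlinarith [hπ, hk1, hl1]
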